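/- Let ε : [β₀, β₁] → (0,∞) be differentiable and δ > 0, σ ≥ 0, C > 0, A ≥ 0, M : [β₀,β₁] → ℝ continuous, and suppose the differential inequality (d/dt) log ε_t ≤ -(2M_t - A)/C + 2σ·ε_t^{1/2} holds on (β₀,β₁). If ε_{β₀} < ε* and M_t > A/2 + C·σ·ε_{β₀}^{1/2} for all t ∈ (β₀,β₁), then t ↦ ε_t is strictly decreasing on [β₀,β₁]. -/

import Mathlib

open Set Real

/-- stability of the error under global estimates; the error
is strictly decreasing. -/
theorem stmt11 (β₀ β₁ : ℝ) (hβ : β₀ < β₁)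
    (ε ε' M : ℝ → ℝ) (A C σ : ℝ)
    (hA : 0 ≤ A) (hC : 0 < C) (hσ : 0 ≤ σ)
    (hpos : ∀ t ∈ Set.Icc β₀ β₁, 0 < ε t)
    (hderiv : ∀ t ∈ Set.Icc β₀ β₁, HasDerivAt ε (ε' t) t)
    (hMcont : ContinuousOn M (Set.Icc β₀ β₁))
    (hineq : ∀ t ∈ Set.Ioo β₀ β₁,
      ε' t / ε t ≤ -(2 * M t - A) / C + 2 * σ * Real.sqrt (ε t))
    (hM : ∀ t ∈ Set.Ioo β₀ β₁, A / 2 + C * σ * Real.sqrt (ε β₀) < M t) :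
    StrictAntiOn ε (Set.Icc β₀ β₁) := by
  have hcont : ContinuousOn ε (Set.Icc β₀ β₁) := fun t ht =>
    (hderiv t ht).continuousAt.continuousWithinAt
  set b := ε β₀ with hbdef
  have hβ₀mem : β₀ ∈ Set.Icc β₀ β₁ := ⟨le_refl _, hβ.le⟩
  have hb : 0 < b := hpos β₀ hβ₀mem
  have hsb : 0 < Real.sqrt b := Real.sqrt_pos.2 hb
  -- upper bound for ε on the interval
  obtain ⟨t₀, ht₀, hmax⟩ := isCompact_Icc.exists_isMaxOn (Set.nonempty_Icc.2 hβ.le) hcont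
  set B := ε t₀ with hBdef
  have hBb : ∀ t ∈ Set.Icc β₀ β₁, ε t ≤ B := fun t ht => hmax ht
  have hBpos : 0 < B := lt_of_lt_of_le hb (hBb β₀ hβ₀mem)
  set L := 2 * σ * B / Real.sqrt b with hLdef
  have hL0 : 0 ≤ L := by positivity
  -- key derivative estimates
  have key : ∀ t ∈ Set.Ioo β₀ β₁, ε' t < ε t * (2 * σ * (Real.sqrt (ε t) - Real.sqrt b)) := by
    intro t ht
    have htc : t ∈ Set.Icc β₀ β₁ := Set.Ioo_subset_Icc_self ht
    have hεt : 0 < ε t := hpos t htc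
    have h1 : ε' t ≤ ε t * (-(2 * M t - A) / C + 2 * σ * Real.sqrt (ε t)) := by
      have := hineq t ht
      rw [div_le_iff₀ hεt] at this
      linarith [this]
    have h2 : -(2 * M t - A) / C < -(2 * σ * Real.sqrt b) := by
      have hMt := hM t ht
      rw [div_lt_iff₀ hC]
      have : C * σ * Real.sqrt b < M t - A / 2 := by linarith
      nlinarith
    have h3 : ε t * (-(2 * M t - A) / C + 2 * σ * Real.sqrt (ε t))
        < ε t * (2 * σ * (Real.sqrt (ε t) - Real.sqrt b)) := by
      apply mul_lt_mul_of_pos_left _ hεt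
      linarith
    linarith
  have key2 : ∀ t ∈ Set.Ioo β₀ β₁, b ≤ ε t → ε' t ≤ L * (ε t - b) := by
    intro t ht hbt
    have htc : t ∈ Set.Icc β₀ β₁ := Set.Ioo_subset_Icc_self ht
    have hεt : 0 < ε t := hpos t htc
    have hsεt : Real.sqrt b ≤ Real.sqrt (ε t) := Real.sqrt_le_sqrt hbt
    have hεB : ε t ≤ B := hBb t htc
    have h4 : Real.sqrt (ε t) - Real.sqrt b = (ε t - b) / (Real.sqrt (ε t) + Real.sqrt b) := by
      rw [eq_div_iff (by positivity)]
      have e1 : Real.sqrt (ε t) * Real.sqrt (ε t) = ε t := Real.mul_self_sqrt hεt.le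
      have e2 : Real.sqrt b * Real.sqrt b = b := Real.mul_self_sqrt hb.le
      ring_nf
      nlinarith [e1, e2]
    have h5 : ε t * (2 * σ * (Real.sqrt (ε t) - Real.sqrt b)) ≤ L * (ε t - b) := by
      have hden : (0:ℝ) < Real.sqrt (ε t) + Real.sqrt b := by positivity
      rw [h4, hLdef,
        show ε t * (2 * σ * ((ε t - b) / (Real.sqrt (ε t) + Real.sqrt b)))
          = ε t * (2 * σ * (ε t - b)) / (Real.sqrt (ε t) + Real.sqrt b) by ring,
        show 2 * σ * B / Real.sqrt b * (ε t - b)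
          = 2 * σ * B * (ε t - b) / Real.sqrt b by ring,
        div_le_div_iff₀ hden hsb]
      have h0 : 0 ≤ ε t - b := by linarith
      have h1 : ε t * Real.sqrt b ≤ B * (Real.sqrt (ε t) + Real.sqrt b) := by
        nlinarith [Real.sqrt_nonneg (ε t), hsb.le, hεB, hεt.le, hBpos.le, hsεt]
      have h2 : (0:ℝ) ≤ 2 * σ * (ε t - b) :=
        mul_nonneg (by positivity) h0
      nlinarith [mul_le_mul_of_nonneg_left h1 h2]
    exact le_trans (key t ht).le h5
  -- main claim: ε ≤ b on the interval
  have hle : ∀ u ∈ Set.Icc β₀ β₁, ε u ≤ b := by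
    intro u hu
    by_contra hgt
    push_neg at hgt
    have huβ₀ : β₀ < u := by
      rcases lt_or_eq_of_le hu.1 with h | h
      · exact h
      · exact absurd hgt (by rw [← h]; simp [hbdef])
    -- set of times ≤ u where ε ≤ b
    set S := {t | t ∈ Set.Icc β₀ u ∧ ε t ≤ b} with hSdef
    have hSne : S.Nonempty := ⟨β₀, ⟨le_refl _, huβ₀.le⟩, le_refl _⟩
    have hSbdd : BddAbove S := ⟨u, fun t ht => ht.1.2⟩
    have hSclosed : IsClosed S := by
      have : S = Set.Icc β₀ u ∩ ε ⁻¹' (Set.Iic b) := by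
        ext t; simp [hSdef, Set.mem_Icc, and_assoc]
      rw [this]
      have hsub : Set.Icc β₀ u ⊆ Set.Icc β₀ β₁ := Set.Icc_subset_Icc le_rfl hu.2
      exact ContinuousOn.preimage_isClosed_of_isClosed (hcont.mono hsub)
        isClosed_Icc isClosed_Iic
    set c := sSup S with hcdef
    have hcS : c ∈ S := hSclosed.csSup_mem hSne hSbdd
    have hcu : c < u := lt_of_le_of_ne hcS.1.2 (by intro h; exact absurd hgt (by rw [← h]; exact not_lt.2 hcS.2))
    have hcβ₀ : β₀ ≤ c := hcS.1.1
    have hgtc : ∀ t ∈ Set.Ioc c u, b < ε t := by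
      intro t ht
      by_contra hle'
      push_neg at hle'
      have : t ∈ S := ⟨⟨hcβ₀.trans ht.1.le, ht.2⟩, hle'⟩
      exact absurd (le_csSup hSbdd this) (not_le.2 ht.1)
    -- Gronwall on [c', u] for c' ∈ (c, u)
    have hgron : ∀ c' ∈ Set.Ioo c u, ε u - b ≤ (ε c' - b) * Real.exp (L * (u - c')) := by
      intro c' hc'
      have hc'β₀ : β₀ < c' := lt_of_le_of_lt hcβ₀ hc'.1
      have hsub : Set.Icc c' u ⊆ Set.Icc β₀ β₁ :=
        Set.Icc_subset_Icc hc'β₀.le hu.2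
      have hsub2 : Set.Ico c' u ⊆ Set.Ioo β₀ β₁ := fun t ht =>
        ⟨lt_of_lt_of_le hc'β₀ ht.1, lt_of_lt_of_le ht.2 hu.2⟩
      have hgb := le_gronwallBound_of_liminf_deriv_right_le
        (f := fun t => ε t - b) (f' := ε') (δ := ε c' - b) (K := L) (ε := 0)
        (a := c') (b := u)
        ((hcont.mono hsub).sub continuousOn_const)
        (fun x hx r hr => by
          have hd : HasDerivWithinAt (fun t => ε t - b) (ε' x) (Set.Ici x) x :=
            ((hderiv x (hsub (Set.Ico_subset_Icc_self hx))).sub_const b).hasDerivWithinAt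
          exact hd.liminf_right_slope_le hr)
        (le_refl _)
        (fun x hx => by
          have hxoo : x ∈ Set.Ioo β₀ β₁ := hsub2 hx
          have hbx : b ≤ ε x := by
            rcases eq_or_lt_of_le hx.1 with h | h
            · rw [← h]; exact (hgtc c' ⟨hc'.1, hc'.2.le⟩).le
            · exact (hgtc x ⟨hc'.1.trans h, hx.2.le.trans (le_refl _)⟩).le
          have := key2 x hxoo hbx
          simpa using this)
      have := hgb u ⟨hc'.2.le, le_refl _⟩
      rwa [gronwallBound_ε0] at this
    -- take limit c' → c from the right
    have hεc : ε c ≤ b := hcS.2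
    have hmemc : c ∈ Set.Icc β₀ β₁ := ⟨hcβ₀, hcS.1.2.trans hu.2⟩
    have hcε : ContinuousAt ε c := (hderiv c hmemc).continuousAt
    have htend : Filter.Tendsto (fun c' => (ε c' - b) * Real.exp (L * (u - c')))
        (nhdsWithin c (Set.Ioi c)) (nhds ((ε c - b) * Real.exp (L * (u - c)))) := by
      apply Filter.Tendsto.mono_left _ nhdsWithin_le_nhds
      exact ((hcε.sub continuousAt_const).mul
        (((continuousAt_const.sub continuousAt_id).const_mul L).rexp)).tendsto
    have hne : (nhdsWithin c (Set.Ioi c)).NeBot := nhdsGT_neBot c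
    have hlim : ε u - b ≤ (ε c - b) * Real.exp (L * (u - c)) := by
      apply ge_of_tendsto htend
      filter_upwards [Ioo_mem_nhdsGT_of_mem ⟨le_refl c, hcu⟩] with c' hc'
      exact hgron c' hc'
    have : (ε c - b) * Real.exp (L * (u - c)) ≤ 0 :=
      mul_nonpos_of_nonpos_of_nonneg (by linarith) (Real.exp_pos _).le
    linarith
  -- conclude: derivative negative on interior
  have hderivneg : ∀ t ∈ interior (Set.Icc β₀ β₁), deriv ε t < 0 := by
    intro t ht
    rw [interior_Icc] at ht
    have htc : t ∈ Set.Icc β₀ β₁ := Set.Ioo_subset_Icc_self ht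
    have hεt : 0 < ε t := hpos t htc
    have hsεt : Real.sqrt (ε t) ≤ Real.sqrt b := Real.sqrt_le_sqrt (hle t htc)
    have hk := key t ht
    have : ε' t < 0 := by
      have : ε t * (2 * σ * (Real.sqrt (ε t) - Real.sqrt b)) ≤ 0 := by
        apply mul_nonpos_of_nonneg_of_nonpos hεt.le
        nlinarith
      linarith
    rwa [(hderiv t htc).deriv]
  exact strictAntiOn_of_deriv_neg (convex_Icc β₀ β₁) hcont hderivneg
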